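/- arXiv:1709.06253 — 6 statements merged into one kernel-verified Lean document; each statement's English description precedes it below -/
import Mathlib

section
/- Let (A,m) be a Noetherian local ring, I an ideal of A, and M a finitely generated A-module. If grade(I,M) = 0 (i.e., I consists of zerodivisors on M and IM ≠ M), then grade(G_+, G_I(M)) = 0, where G_I(M) is the associated graded module of M with respect to I and G_+ is the irrelevant ideal of the associated graded ring G_I(A). -/
set_option synthInstance.maxHeartbeats 1000000
set_option maxHeartbeats 1000000
noncomputable section

universe u

variable (A : Type u) [CommRing A] (I : Ideal A)

/-- The ideal `I·R(I)` of the Rees algebra generated by the degree-zero copy of `I`. -/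
def degZeroIdeal : Ideal (reesAlgebra I) := Ideal.map (algebraMap A (reesAlgebra I)) I

/-- The associated graded ring `G_I(A) = ⊕_{n ≥ 0} Iⁿ/I^{n+1} = R(I)/I·R(I)`. -/
abbrev AssocGradedRing := reesAlgebra I ⧸ degZeroIdeal A I

/-- The irrelevant ideal `R(I)₊ = ⊕_{n ≥ 1} Iⁿtⁿ` of the Rees algebra. -/
def reesPlus : Ideal (reesAlgebra I) :=
  RingHom.ker ((Polynomial.constantCoeff (R := A)).comp
    (Subalgebra.val (reesAlgebra I)).toRingHom)

/-- The irrelevant ideal `G₊ = ⊕_{n ≥ 1} Iⁿ/I^{n+1}` of the associated graded ring. -/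
def gradedPlus : Ideal (AssocGradedRing A I) :=
  (reesPlus A I).map (Ideal.Quotient.mk (degZeroIdeal A I))

variable (M : Type u) [AddCommGroup M] [Module A M]

/-- The Rees algebra acts on `M[t] = PolynomialModule A M` through `R(I) ⊆ A[t]`. -/
instance : Module (reesAlgebra I) (PolynomialModule A M) :=
  Module.compHom _ (Subalgebra.val (reesAlgebra I)).toRingHom

/-- The Rees module `R(I,M) = ⊕_{n ≥ 0} IⁿM tⁿ ⊆ M[t]`, as a module over the Rees algebra. -/
def reesModule : Submodule (reesAlgebra I) (PolynomialModule A M) where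
  carrier := {p | ∀ n : ℕ, p.coeff n ∈ (I ^ n • ⊤ : Submodule A M)}
  add_mem' := by
    intro p q hp hq n
    exact Submodule.add_mem _ (hp n) (hq n)
  zero_mem' := by
    intro n
    simp
  smul_mem' := by
    intro r p hp n
    have key : ((r : Polynomial A) • p).coeff n ∈ (I ^ n • ⊤ : Submodule A M) := by
      rw [PolynomialModule.smul_apply]
      refine Submodule.sum_mem _ ?_
      rintro ⟨i, j⟩ hij
      have hij : i + j = n := by simpa using hij
      have h1 : (r : Polynomial A).coeff i ∈ I ^ i := r.2 i
      have h3 : (r : Polynomial A).coeff i • (p.coeff j) ∈ I ^ i • (I ^ j • ⊤ : Submodule A M) :=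
        Submodule.smul_mem_smul h1 (hp j)
      rw [← Submodule.smul_assoc, smul_eq_mul, ← pow_add, hij] at h3
      exact h3
    exact key

instance : HasQuotient (reesModule A I M)
    (Submodule (reesAlgebra I) (reesModule A I M)) :=
  Submodule.hasQuotient (R := reesAlgebra I) (M := reesModule A I M)

/-- The associated graded module `G_I(M) = ⊕_{n ≥ 0} IⁿM/I^{n+1}M = R(I,M)/(I·R(I))·R(I,M)`,
as a module over the Rees algebra. -/
abbrev AssocGradedModule : Type u :=
  (reesModule A I M) ⧸
    (degZeroIdeal A I • (⊤ : Submodule (reesAlgebra I) (reesModule A I M)))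

instance : AddCommGroup (AssocGradedModule A I M) :=
  Submodule.Quotient.addCommGroup (R := reesAlgebra I) (M := reesModule A I M) _

instance : Module (reesAlgebra I) (AssocGradedModule A I M) :=
  Submodule.Quotient.module (R := reesAlgebra I) (M := reesModule A I M) _

/-- `G_I(M)` is a module over the associated graded ring `G_I(A)`. -/
instance : Module (AssocGradedRing A I) (AssocGradedModule A I M) :=
  Module.IsTorsionBySet.module (R := reesAlgebra I) (I := degZeroIdeal A I) (by
    intro x a
    obtain ⟨y, rfl⟩ := Submodule.Quotient.mk_surjective _ x
    rw [← Submodule.Quotient.mk_smul, Submodule.Quotient.mk_eq_zero]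
    exact Submodule.smul_mem_smul a.2 trivial)

/-- The grade of an ideal `J` on a module `N`: the supremum of lengths of `N`-regular
sequences contained in `J`. -/
def moduleGrade (S : Type*) [CommRing S] (J : Ideal S)
    (N : Type*) [AddCommGroup N] [Module S N] : ℕ∞ :=
  sSup {n : ℕ∞ | ∃ rs : List S, (rs.length : ℕ∞) = n ∧ (∀ r ∈ rs, r ∈ J) ∧
    RingTheory.Sequence.IsRegular N rs}

section AuxAss
variable {R₀ : Type*} [CommRing R₀] {M₀ : Type*} [AddCommGroup M₀] [Module R₀ M₀]

lemma aux_colon_eq (y : M₀) : (⊥ : Submodule R₀ M₀).colon {y} = (R₀ ∙ y).annihilator := by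
  ext s
  rw [Submodule.mem_colon_singleton, Submodule.mem_annihilator_span_singleton, Submodule.mem_bot]

lemma aux_ann_smul_eq {p : Ideal R₀} (hp : p.IsPrime) {x : M₀}
    (hx : p = (R₀ ∙ x).annihilator) {r : R₀} (hr : r • x ≠ 0) :
    (R₀ ∙ (r • x)).annihilator = p := by
  ext s
  rw [Submodule.mem_annihilator_span_singleton]
  constructor
  · intro h
    rw [smul_smul] at h
    have : s * r ∈ p := hx ▸ (Submodule.mem_annihilator_span_singleton _ _).mpr h
    rcases hp.mem_or_mem this with h' | h'
    · exact h'
    · exact absurd ((Submodule.mem_annihilator_span_singleton _ _).mp (hx ▸ h')) hr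
  · intro h
    have : s • x = 0 := (Submodule.mem_annihilator_span_singleton _ _).mp (hx ▸ h)
    rw [smul_comm, this, smul_zero]

lemma aux_ann_coe_eq (N : Submodule R₀ M₀) (y : N) :
    (R₀ ∙ y).annihilator = (R₀ ∙ (y : M₀)).annihilator := by
  ext s
  rw [Submodule.mem_annihilator_span_singleton, Submodule.mem_annihilator_span_singleton]
  constructor
  · intro h
    have := congrArg (Subtype.val) h
    simpa using this
  · intro h
    ext
    simpa using h

lemma aux_ass_span_singleton_subset {p : Ideal R₀} (hp : p.IsPrime) {x : M₀}
    (hx : p = (R₀ ∙ x).annihilator) :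
    associatedPrimes R₀ (R₀ ∙ x : Submodule R₀ M₀) ⊆ {p} := by
  rintro q ⟨hq, y, hy⟩
  have hy0 : (y : M₀) ≠ 0 := by
    intro h
    apply hq.ne_top
    rw [hy, aux_colon_eq, aux_ann_coe_eq, h]
    simp [Submodule.annihilator_bot]
  obtain ⟨r, hr⟩ := Submodule.mem_span_singleton.mp y.2
  rw [aux_colon_eq, aux_ann_coe_eq] at hy
  rw [← hr] at hy hy0
  simp only [Set.mem_singleton_iff]
  rw [hy, aux_ann_smul_eq hp hx hy0, hp.radical]

lemma aux_ass_subset_union (N : Submodule R₀ M₀) :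
    associatedPrimes R₀ M₀ ⊆ associatedPrimes R₀ N ∪ associatedPrimes R₀ (M₀ ⧸ N) := by
  exact associatedPrimes.subset_union_of_exact N.injective_subtype (LinearMap.exact_subtype_mkQ N)

lemma aux_ass_eq_of_equiv {M' : Type*} [AddCommGroup M'] [Module R₀ M'] (e : M₀ ≃ₗ[R₀] M') :
    associatedPrimes R₀ M₀ = associatedPrimes R₀ M' :=
  subset_antisymm (associatedPrimes.subset_of_injective (f := e.toLinearMap) e.injective)
    (associatedPrimes.subset_of_injective (f := e.symm.toLinearMap) e.symm.injective)

lemma aux_ass_finite (R M : Type*) [CommRing R] [IsNoetherianRing R] [AddCommGroup M] [Module R M]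
    [Module.Finite R M] : (associatedPrimes R M).Finite := by
  have key : ∀ N : Submodule R M, (associatedPrimes R (M ⧸ N)).Finite := by
    intro N
    induction N using IsNoetherian.induction with
    | hgt N IH =>
      by_cases hN : N = ⊤
      · subst hN
        have : Subsingleton (M ⧸ (⊤ : Submodule R M)) :=
          Submodule.Quotient.subsingleton_iff.mpr rfl
        rw [associatedPrimes.eq_empty_of_subsingleton]
        exact Set.finite_empty
      · have : Nontrivial (M ⧸ N) :=
          Submodule.Quotient.nontrivial_iff.mpr hN
        obtain ⟨p, hpass⟩ := associatedPrimes.nonempty R (M ⧸ N)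
        obtain ⟨hp, xb, hxb⟩ := isAssociatedPrime_iff.mp hpass
        rw [aux_colon_eq] at hxb
        have hxb0 : xb ≠ 0 := by
          intro h
          apply hp.ne_top
          rw [hxb, h]
          simp [Submodule.annihilator_bot]
        obtain ⟨x, rfl⟩ := Submodule.mkQ_surjective N xb
        set N' : Submodule R M := N ⊔ R ∙ x with hN'
        have hlt : N < N' := by
          refine lt_of_le_of_ne le_sup_left (fun h => hxb0 ?_)
          have hxN : x ∈ N := h ▸ Submodule.mem_sup_right (Submodule.mem_span_singleton_self x)
          rwa [Submodule.mkQ_apply, Submodule.Quotient.mk_eq_zero]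
        have hmap : Submodule.map N.mkQ N' = (R ∙ N.mkQ x) := by
          rw [hN', Submodule.map_sup, Submodule.map_span, Set.image_singleton]
          have : Submodule.map N.mkQ N = ⊥ := by
            rw [eq_bot_iff]
            rintro y ⟨z, hz, rfl⟩
            simpa [Submodule.Quotient.mk_eq_zero] using hz
          rw [this, bot_sup_eq]
        have hsub := aux_ass_subset_union (M₀ := M ⧸ N) (R ∙ N.mkQ x)
        have h1 : associatedPrimes R (R ∙ N.mkQ x : Submodule R (M ⧸ N)) ⊆ {p} :=
          aux_ass_span_singleton_subset hp hxb
        have h2 : associatedPrimes R ((M ⧸ N) ⧸ (R ∙ N.mkQ x : Submodule R (M ⧸ N)))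
            = associatedPrimes R (M ⧸ N') := by
          rw [← hmap]
          exact aux_ass_eq_of_equiv (Submodule.quotientQuotientEquivQuotient N N' le_sup_left)
        refine Set.Finite.subset (Set.Finite.union (Set.finite_singleton p) ?_)
          (hsub.trans (Set.union_subset_union h1 h2.le))
        exact IH N' hlt
  have := key ⊥
  rwa [aux_ass_eq_of_equiv (Submodule.quotEquivOfEqBot ⊥ rfl)] at this

lemma aux_exists_common_ann (R M : Type*) [CommRing R] [IsNoetherianRing R] [AddCommGroup M]
    [Module R M] [Module.Finite R M] [Nontrivial M]
    {I : Ideal R} (hzd : ∀ x ∈ I, ¬ IsSMulRegular M x) :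
    ∃ a : M, a ≠ 0 ∧ ∀ x ∈ I, x • a = 0 := by
  have hfin := aux_ass_finite R M
  have hsub : (I : Set R) ⊆ ⋃ p ∈ (↑hfin.toFinset : Set (Ideal R)), (p : Set R) := by
    intro r hr
    have : r ∈ ⋃ p ∈ associatedPrimes R M, (p : Set R) := by
      rw [biUnion_associatedPrimes_eq_compl_regular]
      exact hzd r hr
    obtain ⟨p, hp, hrp⟩ := Set.mem_iUnion₂.mp this
    exact Set.mem_iUnion₂.mpr ⟨p, by simpa using hp, hrp⟩
  rw [Ideal.subset_union_prime (⊥ : Ideal R) ⊥ (fun p hp _ _ =>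
      ((Set.Finite.mem_toFinset hfin).mp hp).isPrime)] at hsub
  obtain ⟨p, hps, hIp⟩ := hsub
  obtain ⟨hp, a, ha⟩ := isAssociatedPrime_iff.mp ((Set.Finite.mem_toFinset hfin).mp hps)
  rw [aux_colon_eq] at ha
  refine ⟨a, ?_, ?_⟩
  · intro h
    apply hp.ne_top
    rw [ha, h]
    simp [Submodule.annihilator_bot]
  · intro x hx
    exact (Submodule.mem_annihilator_span_singleton _ _).mp (ha ▸ hIp hx)

end AuxAss

lemma aux_degZero_coeff_mem {f : reesAlgebra I} (hf : f ∈ degZeroIdeal A I) (n : ℕ) :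
    (f : Polynomial A).coeff n ∈ I ^ (n + 1) := by
  rw [degZeroIdeal, Ideal.map] at hf
  induction hf using Submodule.span_induction generalizing n with
  | mem g hg =>
    obtain ⟨x, hx, rfl⟩ := hg
    have hcoe : ((algebraMap A (reesAlgebra I) x : reesAlgebra I) : Polynomial A)
        = Polynomial.C x := rfl
    rw [hcoe, Polynomial.coeff_C]
    split
    · next h => subst h; simpa [pow_one] using hx
    · exact Ideal.zero_mem _
  | zero => simp
  | add g h _ _ ihg ihh =>
    have hcoe : ((g + h : reesAlgebra I) : Polynomial A)
        = (g : Polynomial A) + (h : Polynomial A) := rfl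
    rw [hcoe, Polynomial.coeff_add]
    exact Ideal.add_mem _ (ihg n) (ihh n)
  | smul r g _ ihg =>
    have hcoe : ((r • g : reesAlgebra I) : Polynomial A) = (r : Polynomial A) * g := rfl
    rw [hcoe, Polynomial.coeff_mul]
    refine Ideal.sum_mem _ ?_
    rintro ⟨i, j⟩ hij
    rw [Finset.HasAntidiagonal.mem_antidiagonal] at hij
    have h1 : (r : Polynomial A).coeff i ∈ I ^ i := r.2 i
    have h2 := ihg j
    have h3 := Ideal.mul_mem_mul h1 h2
    rw [← pow_add] at h3
    have hexp : i + (j + 1) = n + 1 := by omega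
    rwa [hexp] at h3

lemma aux_smulTop_coeff_mem {z : reesModule A I M}
    (hz : z ∈ (degZeroIdeal A I • ⊤ : Submodule (reesAlgebra I) (reesModule A I M)))
    (n : ℕ) : z.1.coeff n ∈ (I ^ (n + 1) • ⊤ : Submodule A M) := by
  refine Submodule.smul_induction_on
    (p := fun w => w.1.coeff n ∈ (I ^ (n + 1) • ⊤ : Submodule A M)) hz ?_ ?_
  · intro f hf x _
    have hcoe : (f • x : reesModule A I M).1 = (f : Polynomial A) • x.1 := rfl
    show (f • x : reesModule A I M).1.coeff n ∈ _
    rw [hcoe, PolynomialModule.smul_apply]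
    refine Submodule.sum_mem _ ?_
    rintro ⟨i, j⟩ hij
    rw [Finset.HasAntidiagonal.mem_antidiagonal] at hij
    have h1 := aux_degZero_coeff_mem A I hf i
    have h3 : _ ∈ I ^ (i + 1) • (I ^ j • ⊤ : Submodule A M) :=
      Submodule.smul_mem_smul h1 (x.2 j)
    rw [← Submodule.smul_assoc, smul_eq_mul, ← pow_add] at h3
    have hexp : i + 1 + j = n + 1 := by omega
    rwa [hexp] at h3
  · intro x y ihx ihy
    show (x + y : reesModule A I M).1.coeff n ∈ _
    have hcoe : (x + y : reesModule A I M).1 = x.1 + y.1 := rfl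
    rw [hcoe, PolynomialModule.coeff_add, Finsupp.add_apply]
    exact Submodule.add_mem _ ihx ihy

lemma aux_single_mem_reesModule {c : ℕ} {a : M} (ha : a ∈ (I ^ c • ⊤ : Submodule A M)) :
    (PolynomialModule.single A c a : PolynomialModule A M) ∈ reesModule A I M := by
  intro n
  rw [PolynomialModule.coeff_single, Finsupp.single_apply]
  split
  · next h => exact h ▸ ha
  · exact Submodule.zero_mem _

lemma aux_rees_smul_single_eq_zero {f : reesAlgebra I} (hf : f ∈ reesPlus A I)
    {c : ℕ} {a : M} (haI : ∀ x ∈ I, x • a = 0) :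
    (f : Polynomial A) • (PolynomialModule.single A c a : PolynomialModule A M) = 0 := by
  refine PolynomialModule.ext (Finsupp.ext fun n => ?_)
  rw [PolynomialModule.smul_single_apply]
  have hzero : (0 : PolynomialModule A M).coeff n = 0 := rfl
  rw [hzero]
  split
  · next h =>
    rcases Nat.eq_zero_or_pos (n - c) with h0 | hpos
    · have hc0 : (f : Polynomial A).coeff 0 = 0 := by
        have := hf
        rw [reesPlus, RingHom.mem_ker] at this
        simpa [Polynomial.constantCoeff_apply] using this
      rw [h0, hc0, zero_smul]
    · exact haI _ (Ideal.pow_le_self hpos.ne' (f.2 (n - c)))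
  · rfl

/-- **`grade(I,M) = 0` implies `grade(G₊, G_I(M)) = 0`.**
Let `(A,m)` be a Noetherian local ring, `I` an ideal and `M` a finitely generated `A`-module.
If `grade(I,M) = 0`, i.e. `I` consists of zerodivisors on `M` and `IM ≠ M`, then
`grade(G₊, G_I(M)) = 0`, where `G_I(M)` is the associated graded module and `G₊` the
irrelevant ideal of the associated graded ring. -/
theorem moduleGrade_assocGraded_eq_zero [IsNoetherianRing A] [IsLocalRing A] [Module.Finite A M]
    (hIM : (I • ⊤ : Submodule A M) ≠ ⊤)
    (hzd : ∀ x ∈ I, ¬ IsSMulRegular M x) :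
    moduleGrade (AssocGradedRing A I) (gradedPlus A I) (AssocGradedModule A I M) = 0 := by
  classical
  have hM : Nontrivial M := by
    by_contra h
    rw [not_nontrivial_iff_subsingleton] at h
    exact hIM (Subsingleton.elim _ _)
  obtain ⟨a, ha0, haI⟩ := aux_exists_common_ann A M hzd
  have hInt : I ≠ ⊤ := by
    intro h
    apply hIM
    rw [h, Submodule.top_smul]
  have hKrull := Ideal.iInf_pow_smul_eq_bot_of_isLocalRing (M := M) (I := I) hInt
  have hex : ∃ n, a ∉ (I ^ n • ⊤ : Submodule A M) := by
    by_contra h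
    push_neg at h
    have : a ∈ (⨅ n : ℕ, I ^ n • ⊤ : Submodule A M) := (Submodule.mem_iInf _).mpr h
    rw [hKrull] at this
    exact ha0 this
  letI : DecidablePred (fun n => a ∉ (I ^ n • ⊤ : Submodule A M)) :=
    fun _ => Classical.propDecidable _
  set c := Nat.find hex - 1 with hc
  have hfind0 : Nat.find hex ≠ 0 := by
    intro h
    have hs := Nat.find_spec hex
    rw [h] at hs
    exact hs (by simp)
  have hc1 : a ∈ (I ^ c • ⊤ : Submodule A M) := by
    by_contra h
    exact Nat.find_min hex (show c < Nat.find hex by omega) h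
  have hc2 : a ∉ (I ^ (c + 1) • ⊤ : Submodule A M) := by
    have hce : c + 1 = Nat.find hex := by omega
    rw [hce]
    exact Nat.find_spec hex
  have he0 : (PolynomialModule.single A c a : PolynomialModule A M) ∈ reesModule A I M :=
    aux_single_mem_reesModule A I M hc1
  set E : AssocGradedModule A I M :=
    Submodule.Quotient.mk ⟨PolynomialModule.single A c a, he0⟩ with hEdef
  have hE0 : E ≠ 0 := by
    intro h
    rw [hEdef, Submodule.Quotient.mk_eq_zero] at h
    have hmem := aux_smulTop_coeff_mem A I M h c
    apply hc2
    simpa [PolynomialModule.single_apply] using hmem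
  have hkill : ∀ r ∈ gradedPlus A I, r • E = 0 := by
    intro r hr
    obtain ⟨f, hf, rfl⟩ :=
      (Ideal.mem_map_iff_of_surjective _ Ideal.Quotient.mk_surjective).mp hr
    have hsm : (Ideal.Quotient.mk (degZeroIdeal A I) f) • E = f • E := rfl
    have hfe : f • (⟨PolynomialModule.single A c a, he0⟩ : reesModule A I M) = 0 :=
      Subtype.ext (aux_rees_smul_single_eq_zero A I M hf haI)
    rw [hsm, hEdef, ← Submodule.Quotient.mk_smul, hfe, Submodule.Quotient.mk_zero]
  rw [moduleGrade]
  refine le_antisymm (sSup_le ?_) zero_le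
  rintro n ⟨rs, hlen, hmem, hreg⟩
  cases rs with
  | nil =>
    rw [← hlen]
    simp
  | cons r rest =>
    exfalso
    have hr := hmem r (List.mem_cons_self)
    have hreg1 := ((RingTheory.Sequence.isRegular_cons_iff _ r rest).mp hreg).1
    exact hE0 (hreg1 (show r • E = r • 0 by rw [hkill r hr, smul_zero]))


end
end

section
/- Let A be a Noetherian local ring, I an ideal, M a finitely generated A-module, and x ∈ I \ I^2 such that the initial form x* ∈ I/I^2 is a regular element on the associated graded module G_I(M). Then (I^{n+1}M :_M x) = I^nM for all n ≥ 0; in particular, x is a regular element on M. -/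
section KrullAux

universe u v

private lemma krull_intersection_aux {A : Type u} [CommRing A] [IsNoetherianRing A]
    [IsLocalRing A] (I : Ideal A) (hI : I ≠ ⊤) (M : Type v) [AddCommGroup M] [Module A M]
    [Module.Finite A M] : (⨅ n : ℕ, I ^ n • ⊤ : Submodule A M) = ⊥ := by
  let R := ULift.{v} A
  let N := ULift.{u} M
  let e : R ≃+* A := ULift.ringEquiv
  haveI : IsNoetherianRing R := isNoetherianRing_of_ringEquiv A e.symm
  haveI : Nontrivial R := ⟨⟨0⟩, ⟨1⟩, fun h => zero_ne_one (congrArg ULift.down h)⟩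
  haveI : IsLocalRing R := IsLocalRing.of_surjective' (e.symm : A →+* R) e.symm.surjective
  have hsmul : ∀ (r : R) (n : N), r • n = ⟨r.down • n.down⟩ := fun r n => rfl
  -- membership transfer
  have mem_iff : ∀ (K : Ideal A) (m : M),
      ((⟨m⟩ : N) ∈ (K.comap (e : R →+* A)) • (⊤ : Submodule R N)) ↔
        m ∈ (K • ⊤ : Submodule A M) := by
    intro K m
    constructor
    · intro h
      have : ∀ n : N, n ∈ (K.comap (e : R →+* A)) • (⊤ : Submodule R N) →
          n.down ∈ (K • ⊤ : Submodule A M) := by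
        intro n hn
        refine Submodule.smul_induction_on hn ?_ ?_
        · intro r hr n' _
          exact Submodule.smul_mem_smul hr trivial
        · intro a b ha hb
          exact Submodule.add_mem _ ha hb
      exact this _ h
    · intro h
      refine Submodule.smul_induction_on h ?_ ?_
      · intro r hr n' _
        have : (⟨r • n'⟩ : N) = (⟨r⟩ : R) • (⟨n'⟩ : N) := rfl
        rw [this]
        exact Submodule.smul_mem_smul (show (⟨r⟩ : R) ∈ K.comap (e : R →+* A) from hr) trivial
      · intro a b ha hb
        have : (⟨a + b⟩ : N) = (⟨a⟩ : N) + ⟨b⟩ := rfl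
        rw [this]
        exact Submodule.add_mem _ ha hb
  haveI : Module.Finite R N := by
    haveI := Classical.decEq N
    obtain ⟨S, hS⟩ := Module.Finite.fg_top (R := A) (M := M)
    refine ⟨⟨S.image (fun m => (⟨m⟩ : N)), ?_⟩⟩
    rw [eq_top_iff]
    rintro ⟨m⟩ -
    have hm : m ∈ Submodule.span A (S : Set M) := hS ▸ trivial
    refine Submodule.span_induction (p := fun x _ => (⟨x⟩ : N) ∈
      Submodule.span R ((S.image (fun m => (⟨m⟩ : N)) : Finset N) : Set N)) ?_ ?_ ?_ ?_ hm
    · intro y hy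
      exact Submodule.subset_span (by simpa using ⟨y, hy, rfl⟩)
    · exact Submodule.zero_mem _
    · intro a b _ _ ha hb
      exact Submodule.add_mem _ ha hb
    · intro a y _ hy
      have : (⟨a • y⟩ : N) = (⟨a⟩ : R) • (⟨y⟩ : N) := rfl
      rw [this]
      exact Submodule.smul_mem _ _ hy
  set J : Ideal R := I.comap (e : R →+* A) with hJdef
  have hcomap : ∀ n : ℕ, (I ^ n).comap (e : R →+* A) = J ^ n := by
    intro n
    have hms : ∀ K : Ideal A, K.comap (e : R →+* A) = K.map (e.symm : A →+* R) := fun K => by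
      rw [Ideal.map_comap_of_equiv e.symm, RingEquiv.symm_symm, Ideal.comap_coe]
    rw [hJdef, hms, hms, Ideal.map_pow]
  have hJ : J ≠ ⊤ := by
    intro h
    apply hI
    rw [Ideal.eq_top_iff_one] at h ⊢
    rw [hJdef, Ideal.mem_comap, map_one] at h
    exact h
  have hbot : (⨅ n : ℕ, J ^ n • ⊤ : Submodule R N) = ⊥ :=
    J.iInf_pow_smul_eq_bot_of_isLocalRing hJ
  rw [eq_bot_iff]
  intro m hm
  rw [Submodule.mem_iInf] at hm
  have : (⟨m⟩ : N) ∈ (⨅ n : ℕ, J ^ n • ⊤ : Submodule R N) := by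
    rw [Submodule.mem_iInf]
    intro n
    rw [← hcomap n]
    exact (mem_iff (I ^ n) m).mpr (hm n)
  rw [hbot, Submodule.mem_bot] at this
  simpa using congrArg ULift.down this

end KrullAux

/-- **Colon stability from regularity of an initial form.**
Let `A` be a Noetherian local ring, `I` an ideal, `M` a finitely generated `A`-module and
`x ∈ I \ I²` such that the initial form `x* ∈ I/I²` is regular on the associated graded module
`G_I(M) = ⊕_{n ≥ 0} IⁿM/I^{n+1}M` (i.e. for every `n` the induced multiplication map
`IⁿM/I^{n+1}M → I^{n+1}M/I^{n+2}M` is injective). Then `(I^{n+1}M :_M x) = IⁿM` for all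
`n ≥ 0`; in particular `x` is a regular element on `M`. -/
theorem colon_eq_of_initial_form_regular
    (A : Type*) [CommRing A] [IsNoetherianRing A] [IsLocalRing A]
    (I : Ideal A) (M : Type*) [AddCommGroup M] [Module A M] [Module.Finite A M]
    (x : A) (hxI : x ∈ I) (hxI2 : x ∉ I ^ 2)
    (hreg : ∀ n : ℕ, ∀ m ∈ (I ^ n • ⊤ : Submodule A M),
      x • m ∈ (I ^ (n + 2) • ⊤ : Submodule A M) → m ∈ (I ^ (n + 1) • ⊤ : Submodule A M)) :
    (∀ n : ℕ, ∀ m : M,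
      x • m ∈ (I ^ (n + 1) • ⊤ : Submodule A M) ↔ m ∈ (I ^ n • ⊤ : Submodule A M)) ∧
    IsSMulRegular M x := by
  have key : ∀ n : ℕ, ∀ m : M,
      x • m ∈ (I ^ (n + 1) • ⊤ : Submodule A M) → m ∈ (I ^ n • ⊤ : Submodule A M) := by
    intro n
    induction n with
    | zero => intro m _; simp
    | succ n ih =>
      intro m hm
      have hm' : x • m ∈ (I ^ (n + 1) • ⊤ : Submodule A M) :=
        Submodule.smul_mono (Ideal.pow_le_pow_right (by omega)) le_rfl hm
      exact hreg n m (ih m hm') hm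
  have fwd : ∀ n : ℕ, ∀ m : M, m ∈ (I ^ n • ⊤ : Submodule A M) →
      x • m ∈ (I ^ (n + 1) • ⊤ : Submodule A M) := by
    intro n m hm
    rw [pow_succ', mul_smul]
    exact Submodule.smul_mem_smul hxI hm
  refine ⟨fun n m => ⟨key n m, fwd n m⟩, ?_⟩
  have hI : I ≠ ⊤ := by
    intro h
    exact hxI2 (by rw [h, Ideal.top_pow]; trivial)
  intro m m' h
  have h0 : x • (m - m') = 0 := by
    simp only [smul_sub]
    rw [sub_eq_zero]
    exact h
  have : m - m' ∈ (⨅ i : ℕ, I ^ i • ⊤ : Submodule A M) := by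
    rw [Submodule.mem_iInf]
    intro i
    apply key i
    rw [h0]
    exact Submodule.zero_mem _
  rw [krull_intersection_aux I hI M, Submodule.mem_bot, sub_eq_zero] at this
  exact this
end

section
/- Let A be a Noetherian ring, M a finitely generated A-module, and a ∈ A. Then there exist an ideal J of A and a positive integer n_0 such that Tor_{i+2}^A(M, A/(a^n)) ≅ Tor_i^A(M, J) for all i ≥ 1 and all n ≥ n_0. In fact one can take J = (0 :_A a^{n_0}) where n_0 is such that (0 :_A a^n) = (0 :_A a^{n_0}) for all n ≥ n_0. -/
open CategoryTheory

open CategoryTheory.Limits HomologicalComplex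

universe u v w

section DimShift

variable {C : Type*} {D : Type*} [Category.{v} C] [Category.{w} D] [Abelian C] [Abelian D]

variable {K P Y : C} (ι : K ⟶ P) (π : P ⟶ Y) (hw : ι ≫ π = 0)

theorem augW (Q : ProjectiveResolution K) :
    Q.complex.d 1 0 ≫ (Q.π.f 0 ≫ ι) = 0 := by
  erw [← Category.assoc, ProjectiveResolution.complex_d_comp_π_f_zero, zero_comp]

/-- The augmented complex `... → Q₁ → Q₀ → P`. -/
noncomputable def augCx (Q : ProjectiveResolution K) : ChainComplex C ℕ :=
  Q.complex.augment (Q.π.f 0 ≫ ι) (augW ι Q)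

include hw in
theorem augW2 (Q : ProjectiveResolution K) :
    (augCx ι Q).d 1 0 ≫ π = 0 := by
  show (Q.π.f 0 ≫ ι) ≫ π = 0
  erw [Category.assoc, hw, comp_zero]

/-- The augmented chain map to the single complex on `Y`. -/
noncomputable def augπ (Q : ProjectiveResolution K) :
    augCx ι Q ⟶ (ChainComplex.single₀ C).obj Y :=
  (ChainComplex.toSingle₀Equiv _ _).symm ⟨π, augW2 ι π hw Q⟩

theorem augπ_f_zero (Q : ProjectiveResolution K) : (augπ ι π hw Q).f 0 = π :=
  ChainComplex.toSingle₀Equiv_symm_apply_f_zero _ _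

theorem exact_comp_epi (Q : ProjectiveResolution K)
    (hex : (ShortComplex.mk ι π hw).Exact) :
    (ShortComplex.mk (Q.π.f 0 ≫ ι) π (by erw [Category.assoc, hw, comp_zero])).Exact := by
  let φ : ShortComplex.mk (Q.π.f 0 ≫ ι) π (by erw [Category.assoc, hw, comp_zero]) ⟶
      ShortComplex.mk ι π hw :=
    { τ₁ := Q.π.f 0
      τ₂ := 𝟙 _
      τ₃ := 𝟙 _ }
  have : Epi φ.τ₁ := by dsimp [φ]; exact (inferInstance : Epi (Q.π.f 0))
  have : IsIso φ.τ₂ := by dsimp [φ]; infer_instance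
  have : Mono φ.τ₃ := by dsimp [φ]; infer_instance
  rw [ShortComplex.exact_iff_of_epi_of_isIso_of_mono φ]
  exact hex

/-- Shifted projective resolution: augment a resolution of `K` by a projective `P` mapping
onto `Y`. -/
noncomputable def shiftedRes [Projective P] [Epi π] [Mono ι]
    (hex : (ShortComplex.mk ι π hw).Exact)
    (Q : ProjectiveResolution K) : ProjectiveResolution Y where
  complex := augCx ι Q
  projective n := by
    cases n with
    | zero => dsimp [augCx, ChainComplex.augment]; infer_instance
    | succ n => dsimp [augCx, ChainComplex.augment]; infer_instance
  π := augπ ι π hw Q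
  quasiIso := ⟨fun n => by
    cases n with
    | zero =>
      rw [ChainComplex.quasiIsoAt₀_iff, ShortComplex.quasiIso_iff_of_zeros']
      · refine (ShortComplex.exact_and_epi_g_iff_of_iso
            (S₂ := ShortComplex.mk (Q.π.f 0 ≫ ι) π
              (by erw [Category.assoc, hw, comp_zero])) ?_).2
          ⟨exact_comp_epi ι π hw Q hex, inferInstance⟩
        refine ShortComplex.isoMk (Iso.refl _) (Iso.refl _) (Iso.refl _) ?_ ?_
        · dsimp [augCx, ChainComplex.augment]
          exact (Category.id_comp _).trans (Category.comp_id _).symm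
        · dsimp
          exact (Category.id_comp _).trans ((augπ_f_zero ι π hw Q).symm.trans (Category.comp_id _).symm)
      all_goals rfl
    | succ n =>
      rw [quasiIsoAt_iff_exactAt']
      swap
      · apply ChainComplex.exactAt_succ_single_obj
      rw [HomologicalComplex.exactAt_iff' _ (n + 2) (n + 1) n (by simp) (by simp)]
      cases n with
      | zero =>
        let φ : ShortComplex.mk (Q.complex.d 1 0) (Q.π.f 0)
                (Q.complex_d_comp_π_f_zero) ⟶
              ShortComplex.mk (Q.complex.d 1 0) (Q.π.f 0 ≫ ι) (augW ι Q) :=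
          { τ₁ := 𝟙 _
            τ₂ := 𝟙 _
            τ₃ := ι }
        have : Epi φ.τ₁ := by dsimp [φ]; infer_instance
        have : IsIso φ.τ₂ := by dsimp [φ]; infer_instance
        have : Mono φ.τ₃ := by dsimp [φ]; infer_instance
        exact (ShortComplex.exact_iff_of_epi_of_isIso_of_mono φ).1 Q.exact₀
      | succ m =>
        exact Q.exact_succ m⟩

variable (F : C ⥤ D) [F.Additive]

/-- The comparison of short complexes giving the homology shift. -/
noncomputable def shiftScIso (Q : ProjectiveResolution K) (n : ℕ) :
    ((F.mapHomologicalComplex _).obj (augCx ι Q)).sc' (n + 3) (n + 2) (n + 1) ≅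
      ((F.mapHomologicalComplex _).obj Q.complex).sc' (n + 2) (n + 1) n :=
  ShortComplex.isoMk (Iso.refl _) (Iso.refl _) (Iso.refl _)
    (by dsimp [augCx, ChainComplex.augment]; exact (Category.id_comp _).trans (Category.comp_id _).symm)
    (by dsimp [augCx, ChainComplex.augment]; exact (Category.id_comp _).trans (Category.comp_id _).symm)

/-- Dimension shifting isomorphism for left derived functors. -/
noncomputable def leftDerivedShiftIso [Projective P] [Epi π] [Mono ι]
    [HasProjectiveResolutions C]
    (hex : (ShortComplex.mk ι π hw).Exact) (n : ℕ) :
    (F.leftDerived (n + 2)).obj Y ≅ (F.leftDerived (n + 1)).obj K := by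
  have Q : ProjectiveResolution K := (HasProjectiveResolution.out (Z := K)).some
  exact (shiftedRes ι π hw hex Q).isoLeftDerivedObj F (n + 2) ≪≫
    HomologicalComplex.homologyIsoSc' _ (n + 3) (n + 2) (n + 1)
      (by rw [ChainComplex.prev]; omega) (by rw [ChainComplex.next_nat_succ]) ≪≫
    ShortComplex.homologyMapIso (shiftScIso ι F Q n) ≪≫
    (HomologicalComplex.homologyIsoSc' _ (n + 2) (n + 1) n
      (by rw [ChainComplex.prev]; omega) (by rw [ChainComplex.next_nat_succ])).symm ≪≫
    (Q.isoLeftDerivedObj F (n + 1)).symm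

end DimShift

section Application

variable {A : Type u} [CommRing A]

/-- The annihilator of `span {aⁿ}` as kernel of multiplication by `aⁿ`. -/
theorem ann_eq_ker (x : A) :
    (Ideal.span {x}).annihilator = LinearMap.ker (LinearMap.toSpanSingleton A A x) := by
  ext b
  rw [show (Ideal.span {x} : Submodule A A) = Submodule.span A {x} from rfl,
    Submodule.mem_annihilator_span_singleton, LinearMap.mem_ker,
    LinearMap.toSpanSingleton_apply]

theorem ann_mono (a : A) : Monotone (fun n : ℕ => (Ideal.span {a ^ n}).annihilator) := by
  intro n m hnm b hb
  dsimp only at hb ⊢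
  rw [show (Ideal.span {a ^ n} : Submodule A A) = Submodule.span A {a ^ n} from rfl,
    Submodule.mem_annihilator_span_singleton] at hb
  rw [show (Ideal.span {a ^ m} : Submodule A A) = Submodule.span A {a ^ m} from rfl,
    Submodule.mem_annihilator_span_singleton]
  obtain ⟨k, rfl⟩ := Nat.exists_eq_add_of_le hnm
  rw [smul_eq_mul] at hb
  rw [pow_add, smul_eq_mul, ← mul_assoc, hb, zero_mul]

/-- The short complex `J → A → span {x}` is short exact data. -/
theorem exact2 (x : A) (J : Ideal A) (hJ : J = (Ideal.span {x}).annihilator) :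
    (ShortComplex.mk
      (ModuleCat.ofHom J.subtype)
      (ModuleCat.ofHom (LinearMap.toSpanSingleton A A x).rangeRestrict)
      (by
        ext ⟨b, hb⟩
        have : b ∈ LinearMap.ker (LinearMap.toSpanSingleton A A x) := by
          rw [← ann_eq_ker, ← hJ]; exact hb
        simpa using this) : ShortComplex (ModuleCat.{u} A)).Exact := by
  rw [ShortComplex.moduleCat_exact_iff_range_eq_ker]
  show LinearMap.range J.subtype =
    LinearMap.ker (LinearMap.toSpanSingleton A A x).rangeRestrict
  rw [Submodule.range_subtype, LinearMap.ker_rangeRestrict, ← ann_eq_ker, hJ]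

theorem exact1 (x : A) :
    (ShortComplex.mk
      (ModuleCat.ofHom (LinearMap.range (LinearMap.toSpanSingleton A A x)).subtype)
      (ModuleCat.ofHom (Ideal.span {x}).mkQ)
      (by
        ext ⟨b, hb⟩
        show Submodule.mkQ _ b = 0
        rw [Submodule.mkQ_apply, Submodule.Quotient.mk_eq_zero]
        rw [show (Ideal.span {x} : Submodule A A) = Submodule.span A {x} from rfl,
          LinearMap.span_singleton_eq_range]
        exact hb) : ShortComplex (ModuleCat.{u} A)).Exact := by
  rw [ShortComplex.moduleCat_exact_iff_range_eq_ker]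
  show LinearMap.range (LinearMap.range (LinearMap.toSpanSingleton A A x)).subtype =
    LinearMap.ker (Ideal.span {x}).mkQ
  rw [Submodule.range_subtype, Submodule.ker_mkQ,
    show (Ideal.span {x} : Submodule A A) = Submodule.span A {x} from rfl,
    LinearMap.span_singleton_eq_range]

end Application

/-- **Dimension shifting for powers of a principal ideal.**
Let `A` be a Noetherian ring, `M` a finitely generated `A`-module and `a ∈ A`. Then there exist
an ideal `J` and `n₀ ≥ 1` such that `Tor_{i+2}^A(M, A/(aⁿ)) ≅ Tor_i^A(M, J)` for all `i ≥ 1` and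
all `n ≥ n₀`; in fact one can take `J = (0 :_A a^{n₀})` where `n₀` is such that
`(0 :_A aⁿ) = (0 :_A a^{n₀})` for all `n ≥ n₀`. -/
theorem tor_shift_principal (A : Type u) [CommRing A] [IsNoetherianRing A]
    (M : Type u) [AddCommGroup M] [Module A M] [Module.Finite A M] (a : A) :
    ∃ (J : Ideal A) (n₀ : ℕ), 1 ≤ n₀ ∧
      J = Submodule.annihilator (Ideal.span {a ^ n₀}) ∧
      (∀ n ≥ n₀, Submodule.annihilator (Ideal.span {a ^ n}) = J) ∧
      ∀ i : ℕ, 1 ≤ i → ∀ n ≥ n₀,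
        Nonempty ((((Tor (ModuleCat.{u} A) (i + 2)).obj (ModuleCat.of A M)).obj
            (ModuleCat.of A (A ⧸ Ideal.span {a ^ n}))) ≅
          (((Tor (ModuleCat.{u} A) i).obj (ModuleCat.of A M)).obj (ModuleCat.of A J))) := by
  obtain ⟨N, hN⟩ := monotone_stabilizes_iff_noetherian.2 (inferInstance : IsNoetherian A A)
    ⟨fun n => (Ideal.span {a ^ n}).annihilator, ann_mono a⟩
  refine ⟨(Ideal.span {a ^ (max N 1)}).annihilator, max N 1, le_max_right _ _, rfl, ?_, ?_⟩
  · intro n hn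
    have h1 := hN (max N 1) (le_max_left _ _)
    have h2 := hN n (le_trans (le_max_left _ _) hn)
    exact h2.symm.trans h1
  · intro i hi n hn
    obtain ⟨j, rfl⟩ : ∃ j, i = j + 1 := ⟨i - 1, (Nat.succ_pred_eq_of_pos hi).symm⟩
    have hJn : (Ideal.span {a ^ n}).annihilator =
        (Ideal.span {a ^ (max N 1)}).annihilator := by
      have h1 := hN (max N 1) (le_max_left _ _)
      have h2 := hN n (le_trans (le_max_left _ _) hn)
      exact h2.symm.trans h1
    set J : Ideal A := (Ideal.span {a ^ (max N 1)}).annihilator with hJdef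
    set F := (MonoidalCategory.tensoringLeft (ModuleCat.{u} A)).obj (ModuleCat.of A M) with hF
    haveI : Projective (ModuleCat.of A A) :=
      ModuleCat.projective_of_free.{u, u} (Module.Basis.singleton PUnit.{u+1} A)
    -- first short exact sequence : 0 → (aⁿ) → A → A/(aⁿ) → 0
    haveI : Epi (ModuleCat.ofHom (Ideal.span {a ^ n}).mkQ) :=
      (ModuleCat.epi_iff_surjective _).2 (Submodule.mkQ_surjective _)
    haveI : Mono (ModuleCat.ofHom
        (LinearMap.range (LinearMap.toSpanSingleton A A (a ^ n))).subtype) :=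
      (ModuleCat.mono_iff_injective _).2 (Submodule.injective_subtype _)
    -- second short exact sequence : 0 → J → A → (aⁿ) → 0
    haveI : Epi (ModuleCat.ofHom (LinearMap.toSpanSingleton A A (a ^ n)).rangeRestrict) :=
      (ModuleCat.epi_iff_surjective _).2 (LinearMap.surjective_rangeRestrict _)
    haveI : Mono (ModuleCat.ofHom J.subtype) :=
      (ModuleCat.mono_iff_injective _).2 (Submodule.injective_subtype _)
    have iso1 := leftDerivedShiftIso
      (ModuleCat.ofHom (LinearMap.range (LinearMap.toSpanSingleton A A (a ^ n))).subtype)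
      (ModuleCat.ofHom (Ideal.span {a ^ n}).mkQ)
      (by
        ext ⟨b, hb⟩
        show Submodule.mkQ _ b = 0
        rw [Submodule.mkQ_apply, Submodule.Quotient.mk_eq_zero]
        rw [show (Ideal.span {a ^ n} : Submodule A A) = Submodule.span A {a ^ n} from rfl,
          LinearMap.span_singleton_eq_range]
        exact hb)
      F (exact1 (a ^ n)) (j + 1)
    have iso2 := leftDerivedShiftIso
      (ModuleCat.ofHom J.subtype)
      (ModuleCat.ofHom (LinearMap.toSpanSingleton A A (a ^ n)).rangeRestrict)
      (by
        ext ⟨b, hb⟩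
        have : b ∈ LinearMap.ker (LinearMap.toSpanSingleton A A (a ^ n)) := by
          rw [← ann_eq_ker, hJn]; exact hb
        simpa using this)
      F (exact2 (a ^ n) J hJn.symm) j
    exact ⟨iso1 ≪≫ iso2⟩
end

section
/- Let A be a Noetherian ring, I an ideal of A, y ∈ A an A-regular (non-zerodivisor) element, and n a positive integer such that I^{n+1} = y I^n. Then there is a short exact sequence 0 → A/I^n → A/I^{n+1} → A/(y) → 0, where the first map is induced by multiplication by y. -/
/-- **The basic short exact sequence for an ideal with a principal reduction.**
Let `A` be a Noetherian ring, `I` an ideal, `y` a non-zerodivisor of `A` and `n ≥ 1` with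
`I^{n+1} = y·Iⁿ`. Then there is a short exact sequence
`0 → A/Iⁿ → A/I^{n+1} → A/(y) → 0`, where the first map is induced by multiplication by `y`
and the second is the natural surjection. -/
theorem shortExact_of_principal_reduction (A : Type*) [CommRing A] [IsNoetherianRing A]
    (I : Ideal A) (y : A) (hy : y ∈ nonZeroDivisors A) (n : ℕ) (hn : 1 ≤ n)
    (hred : I ^ (n + 1) = Ideal.span {y} * I ^ n) :
    ∃ (f : (A ⧸ I ^ n) →ₗ[A] (A ⧸ I ^ (n + 1)))
      (g : (A ⧸ I ^ (n + 1)) →ₗ[A] (A ⧸ Ideal.span {y})),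
      (∀ b : A, f (Ideal.Quotient.mk (I ^ n) b) = Ideal.Quotient.mk (I ^ (n + 1)) (y * b)) ∧
      (∀ b : A, g (Ideal.Quotient.mk (I ^ (n + 1)) b) = Ideal.Quotient.mk (Ideal.span {y}) b) ∧
      Function.Injective f ∧ Function.Surjective g ∧ Function.Exact f g := by
  have hker : I ^ n ≤ LinearMap.ker
      ((Submodule.mkQ (I ^ (n + 1))).comp (LinearMap.lsmul A A y)) := by
    intro x hx
    simp only [LinearMap.mem_ker, LinearMap.comp_apply, LinearMap.lsmul_apply,
      Submodule.mkQ_apply, Submodule.Quotient.mk_eq_zero, smul_eq_mul]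
    rw [hred]
    exact Ideal.mem_span_singleton_mul.2 ⟨x, hx, rfl⟩
  set f := Submodule.liftQ (I ^ n)
    ((Submodule.mkQ (I ^ (n + 1))).comp (LinearMap.lsmul A A y)) hker with hf
  have hker2 : I ^ (n + 1) ≤ LinearMap.ker (Submodule.mkQ (Ideal.span {y})) := by
    rw [Submodule.ker_mkQ]
    exact hred.le.trans (Ideal.mul_le_inf.trans inf_le_left)
  set g := Submodule.liftQ (I ^ (n + 1)) (Submodule.mkQ (Ideal.span {y})) hker2 with hg
  have hfb : ∀ b : A, f (Ideal.Quotient.mk (I ^ n) b)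
      = Ideal.Quotient.mk (I ^ (n + 1)) (y * b) := by
    intro b
    simp only [hf, Ideal.Quotient.mk_eq_mk, Submodule.liftQ_apply, LinearMap.comp_apply,
      LinearMap.lsmul_apply, Submodule.mkQ_apply, smul_eq_mul]
    rfl
  have hgb : ∀ b : A, g (Ideal.Quotient.mk (I ^ (n + 1)) b)
      = Ideal.Quotient.mk (Ideal.span {y}) b := fun b => rfl
  refine ⟨f, g, hfb, hgb, ?_, ?_, ?_⟩
  · -- injectivity
    rw [injective_iff_map_eq_zero]
    intro a ha
    obtain ⟨b, rfl⟩ := Ideal.Quotient.mk_surjective a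
    rw [hfb] at ha
    have hyb : y * b ∈ I ^ (n + 1) := (Ideal.Quotient.eq_zero_iff_mem).1 ha
    rw [hred] at hyb
    obtain ⟨c, hc, hyc⟩ := Ideal.mem_span_singleton_mul.1 hyb
    have : b = c :=
      sub_eq_zero.1 (hy.2 (b - c)
        (by rw [sub_mul, mul_comm b y, mul_comm c y, hyc, sub_self]))
    rw [Ideal.Quotient.eq_zero_iff_mem, this]
    exact hc
  · intro a
    obtain ⟨b, rfl⟩ := Ideal.Quotient.mk_surjective a
    exact ⟨Ideal.Quotient.mk _ b, hgb b⟩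
  · intro x
    constructor
    · intro hx
      obtain ⟨b, rfl⟩ := Ideal.Quotient.mk_surjective x
      rw [hgb, Ideal.Quotient.eq_zero_iff_mem, Ideal.mem_span_singleton] at hx
      obtain ⟨c, rfl⟩ := hx
      exact ⟨Ideal.Quotient.mk _ c, (hfb c).symm ▸ rfl⟩
    · rintro ⟨a, rfl⟩
      obtain ⟨b, rfl⟩ := Ideal.Quotient.mk_surjective a
      rw [hfb, hgb, Ideal.Quotient.eq_zero_iff_mem, Ideal.mem_span_singleton]
      exact ⟨b, rfl⟩
end

section
/- Let A be a Noetherian ring, I an ideal of A, and M a finitely generated A-module containing an M-regular sequence x_1,...,x_g in I, with g ≥ 1. Then the elements x_1 t, ..., x_g t of degree 1 in the Rees algebra R(I) = ⊕_{n≥0} I^n t^n form a regular sequence on the R(I)-module M[t, t^{-1}] = M ⊗_A A[t,t^{-1}]. -/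
open Polynomial TensorProduct

open RingTheory.Sequence in
lemma aux_isRegular_units_mul_iff {S : Type*} [CommRing S] (N : Type*) [AddCommGroup N]
    [Module S N] {u : S} (hu : IsUnit u) (rs : List S) :
    IsRegular N (rs.map (fun r => u * r)) ↔ IsRegular N rs := by
  have hspan : ∀ l : List S, Ideal.ofList (l.map (fun r => u * r)) = Ideal.ofList l := by
    intro l
    induction l with
    | nil => simp
    | cons a l ih =>
      rw [List.map_cons, Ideal.ofList_cons, Ideal.ofList_cons, ih,
        Ideal.span_singleton_mul_left_unit hu]
  have hspan' : ∀ i : ℕ, Ideal.ofList (List.take i (rs.map (fun r => u * r)))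
      = Ideal.ofList (List.take i rs) := fun i => by
    rw [← List.map_take]; exact hspan _
  rw [isRegular_iff, isRegular_iff, hspan]
  refine and_congr ?_ Iff.rfl
  rw [isWeaklyRegular_iff, isWeaklyRegular_iff]
  simp only [List.length_map, List.getElem_map]
  refine forall_congr' fun i => forall_congr' fun h => ?_
  rw [hspan' i]
  exact IsSMulRegular.mul_iff_right (hu.isSMulRegular _)


/-- **`x₁t, …, x_g t` is a regular sequence on `M[t,t⁻¹]` over the Rees algebra.**
Let `A` be a Noetherian ring, `I` an ideal, and `M` a finitely generated `A`-module containing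
an `M`-regular sequence `x₁, …, x_g` in `I` with `g ≥ 1`. Then the degree-one elements
`x₁t, …, x_gt` of the Rees algebra `R(I) = ⊕_{n ≥ 0} Iⁿtⁿ` form a regular sequence on the
`R(I)`-module `M[t,t⁻¹] = M ⊗_A A[t,t⁻¹]`. -/
theorem rees_regular_sequence_on_laurent_module
    (A : Type*) [CommRing A] [IsNoetherianRing A] (I : Ideal A)
    (M : Type*) [AddCommGroup M] [Module A M] [Module.Finite A M]
    (g : ℕ) (hg : 1 ≤ g) (xs : Fin g → A) (hmem : ∀ i, xs i ∈ I)
    (hreg : RingTheory.Sequence.IsRegular M (List.ofFn xs)) :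
    letI : Module (reesAlgebra I) (LaurentPolynomial A ⊗[A] M) :=
      Module.compHom _
        ((Polynomial.toLaurent (R := A)).comp (Subalgebra.val (reesAlgebra I)).toRingHom)
    RingTheory.Sequence.IsRegular (LaurentPolynomial A ⊗[A] M)
      (List.ofFn fun i : Fin g =>
        (⟨Polynomial.monomial 1 (xs i),
          reesAlgebra.monomial_mem.mpr (by simpa using hmem i)⟩ : reesAlgebra I)) := by
  letI : Module (reesAlgebra I) (LaurentPolynomial A ⊗[A] M) :=
    Module.compHom _
      ((Polynomial.toLaurent (R := A)).comp (Subalgebra.val (reesAlgebra I)).toRingHom)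
  set L := LaurentPolynomial A with hL
  set f : reesAlgebra I →+* L :=
    (Polynomial.toLaurent (R := A)).comp (Subalgebra.val (reesAlgebra I)).toRingHom with hf
  set N := L ⊗[A] M with hNdef
  set as : List (reesAlgebra I) := List.ofFn fun i : Fin g =>
    (⟨Polynomial.monomial 1 (xs i),
      reesAlgebra.monomial_mem.mpr (by simpa using hmem i)⟩ : reesAlgebra I) with has
  -- Step A : transfer along restriction of scalars
  have stepA : RingTheory.Sequence.IsRegular N as ↔
      RingTheory.Sequence.IsRegular N (as.map f) :=
    AddEquiv.isRegular_congr (e := AddEquiv.refl N)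
      (List.forall₂_map_right_iff.mpr (List.forall₂_same.mpr fun r _ x => rfl))
  rw [stepA]
  -- Step B : the entries are `T 1 * C (xs i)`
  have hlist : as.map f
      = (List.ofFn fun i => (LaurentPolynomial.C (xs i) : L)).map
          (fun r => LaurentPolynomial.T 1 * r) := by
    rw [has, List.map_ofFn, List.map_ofFn]
    refine congrArg List.ofFn (funext fun i => ?_)
    show toLaurent ((monomial 1) (xs i)) = LaurentPolynomial.T 1 * LaurentPolynomial.C (xs i)
    rw [Polynomial.toLaurent_C_mul_T, mul_comm]
    norm_cast
  rw [hlist, aux_isRegular_units_mul_iff _ (LaurentPolynomial.isUnit_T 1)]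
  have hlist2 : (List.ofFn fun i => (LaurentPolynomial.C (xs i) : L))
      = (List.ofFn xs).map (algebraMap A L) := by
    rw [List.map_ofFn]
    exact congrArg List.ofFn (funext fun i => LaurentPolynomial.C_eq_algebraMap _)
  rw [hlist2, RingTheory.Sequence.isRegular_iff]
  set J : Ideal A := Ideal.ofList (List.ofFn xs) with hJ
  have hMne : Nontrivial (M ⧸ (J • ⊤ : Submodule A M)) := by
    rw [← not_subsingleton_iff_nontrivial, Submodule.Quotient.subsingleton_iff]
    exact fun h => hreg.top_ne_smul h.symm
  have hA : Nontrivial A := by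
    by_contra h
    rw [not_nontrivial_iff_subsingleton] at h
    haveI := Module.subsingleton A M
    exact (not_subsingleton_iff_nontrivial.mpr hMne)
      ((Submodule.Quotient.mk_surjective _).subsingleton)
  haveI : Module.Free A L := Module.Free.of_basis (AddMonoidAlgebra.basis ℤ A)
  constructor
  · rw [RingTheory.Sequence.isWeaklyRegular_map_algebraMap_iff]
    exact hreg.toIsWeaklyRegular.isWeaklyRegular_lTensor
  · -- the quotient is nonzero
    haveI : Module.FaithfullyFlat A L := inferInstance
    set K : Submodule A N := LinearMap.range
      (TensorProduct.map (LinearMap.id : L →ₗ[A] L) (J • ⊤ : Submodule A M).subtype) with hK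
    have e := TensorProduct.tensorQuotientEquiv (R := A) (M := L) (J • ⊤ : Submodule A M)
    haveI : Nontrivial (L ⊗[A] (M ⧸ (J • ⊤ : Submodule A M))) := inferInstance
    haveI hNK : Nontrivial (N ⧸ K) := e.symm.toEquiv.nontrivial
    intro hEq
    have hgen : ∀ x ∈ J, ∀ n : N, (algebraMap A L x) • n ∈ K := by
      intro x hx n
      induction n using TensorProduct.induction_on with
      | zero => simpa using K.zero_mem
      | tmul l m =>
        refine ⟨l ⊗ₜ ⟨x • m, Submodule.smul_mem_smul hx Submodule.mem_top⟩, ?_⟩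
        erw [TensorProduct.map_tmul]
        simp [TensorProduct.tmul_smul, algebraMap_smul]
      | add n₁ n₂ h₁ h₂ =>
        rw [smul_add]
        exact K.add_mem h₁ h₂
    have hIK : ∀ b ∈ Ideal.ofList ((List.ofFn xs).map (algebraMap A L)), ∀ n : N, b • n ∈ K := by
      intro b hb
      refine Submodule.span_induction (fun y hy => ?_) (fun n => by simpa using K.zero_mem)
        (fun y z _ _ hy hz n => by rw [add_smul]; exact K.add_mem (hy n) (hz n))
        (fun c y _ hy n => ?_) hb
      · rcases List.mem_map.mp hy with ⟨a, ha, rfl⟩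
        exact fun n => hgen a (Ideal.subset_span ha) n
      · rw [smul_eq_mul, mul_comm, mul_smul]
        exact hy _
    have hrestr : Submodule.restrictScalars A
        (Ideal.ofList ((List.ofFn xs).map (algebraMap A L)) • (⊤ : Submodule L N)) = K := by
      apply le_antisymm
      · intro z hz
        rw [Submodule.restrictScalars_mem] at hz
        exact Submodule.smul_induction_on hz (fun b hb n _ => hIK b hb n)
          (fun x y hx hy => K.add_mem hx hy)
      · rintro z ⟨w, rfl⟩
        rw [Submodule.restrictScalars_mem]
        induction w using TensorProduct.induction_on with
        | zero => simp
        | tmul l m' =>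
          obtain ⟨m, hm⟩ := m'
          erw [TensorProduct.map_tmul]
          simp only [LinearMap.id_apply, Submodule.coe_subtype]
          refine Submodule.smul_induction_on hm (fun x hx m'' _ => ?_)
            (fun a b ha hb => ?_)
          · rw [TensorProduct.tmul_smul, ← algebraMap_smul L x (l ⊗ₜ[A] m'')]
            exact Submodule.smul_mem_smul
              (by rw [← Ideal.map_ofList]; exact Ideal.mem_map_of_mem _ hx) Submodule.mem_top
          · rw [TensorProduct.tmul_add]
            exact Submodule.add_mem _ ha hb
        | add w₁ w₂ h₁ h₂ =>
          rw [map_add]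
          exact Submodule.add_mem _ h₁ h₂
    have htop : (⊤ : Submodule A N) = K := by
      rw [← hrestr, ← hEq]
      rfl
    exact (not_subsingleton_iff_nontrivial.mpr hNK)
      (Submodule.Quotient.subsingleton_iff.mpr htop.symm)
end

section
/- Let (A,m) be a Noetherian local ring, I an ideal, and M a finitely generated A-module. Suppose further that grade(I,M) > 0. Then the Ratliff-Rush closures stabilize: the set { n ≥ 1 : (I^{m+n}M :_M I^m) = I^nM for all m ≥ 1 } contains all sufficiently large n; equivalently, defining Ĩ^nM = ∪_{m≥1}(I^{m+n}M :_M I^m), we have Ĩ^nM = I^nM for all n ≫ 0. -/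
open Polynomial PolynomialModule

set_option maxHeartbeats 1000000
set_option synthInstance.maxHeartbeats 1000000

universe u

section Core

variable {A : Type u} [CommRing A] [IsNoetherianRing A] (I : Ideal A)
variable (M : Type u) [AddCommGroup M] [Module A M] [Module.Finite A M]

/-- The filtration `n ↦ (I^(n+1) M :_M I)`. -/
noncomputable def rrFiltration : I.Filtration M where
  N n := ⨅ a : I, Submodule.comap (LinearMap.lsmul A M (a : A)) (I ^ (n + 1) • ⊤)
  mono n := by
    refine iInf_mono fun a => Submodule.comap_mono (Submodule.smul_mono_left ?_)
    exact Ideal.pow_le_pow_right (by omega)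
  smul_le n := by
    rw [Submodule.smul_le]
    intro r hr z hz
    simp only [Submodule.mem_iInf, Submodule.mem_comap, LinearMap.lsmul_apply] at hz ⊢
    intro a
    rw [smul_comm]
    have h2 := Submodule.smul_mem_smul hr (hz a)
    rwa [show n + 1 + 1 = (n + 1) + 1 from rfl, pow_succ', mul_smul]

lemma mem_rrFiltration {n : ℕ} {z : M} :
    z ∈ (rrFiltration I M).N n ↔ ∀ a ∈ I, a • z ∈ (I ^ (n + 1) • ⊤ : Submodule A M) := by
  simp [rrFiltration, Submodule.mem_iInf, Subtype.forall]

theorem rrFiltration_stable {x : A} (hx : x ∈ I) (hreg : IsSMulRegular M x) :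
    (rrFiltration I M).Stable := by
  haveI : IsNoetherian A M := inferInstance
  rw [← Ideal.Filtration.submodule_fg_iff_stable _ (fun i => IsNoetherian.noetherian _)]
  set F := rrFiltration I M with hF
  set N := (I.stableFiltration (⊤ : Submodule A M)).submodule with hN
  have hNfg : N.FG :=
    (Ideal.Filtration.submodule_fg_iff_stable _ (fun i => IsNoetherian.noetherian _)).mpr
      (I.stableFiltration_stable ⊤)
  haveI : IsNoetherian (reesAlgebra I) N := isNoetherian_of_fg_of_noetherian _ hNfg
  set ξ : reesAlgebra I := ⟨monomial 1 x, reesAlgebra.monomial_mem.mpr (by rwa [pow_one])⟩ with hξ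
  have hcoeff : ∀ (p : PolynomialModule A M) (i : ℕ), (ξ • p).coeff (i + 1) = x • p.coeff i := by
    intro p i
    rw [Subalgebra.smul_def, hξ, monomial_smul_apply]
    simp
  have hcoeff0 : ∀ p : PolynomialModule A M, (ξ • p).coeff 0 = 0 := by
    intro p
    rw [Subalgebra.smul_def, hξ, monomial_smul_apply]
    simp
  have hmap : ∀ p : PolynomialModule A M, p ∈ F.submodule → ξ • p ∈ N := by
    intro p hp
    rw [Ideal.Filtration.mem_submodule] at hp ⊢
    intro i
    match i with
    | 0 => rw [hcoeff0]; exact zero_mem _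
    | (i + 1) =>
      rw [hcoeff]
      have h1 := (mem_rrFiltration I M).mp (hp i) x hx
      simpa using h1
  let ℓ : F.submodule →ₗ[reesAlgebra I] N :=
    { toFun := fun p => ⟨ξ • (p : PolynomialModule A M), hmap p p.2⟩
      map_add' := fun p q => by ext : 1; simp [smul_add]
      map_smul' := fun r p => by ext : 1; simp [smul_comm ξ r] }
  have hinj : Function.Injective ℓ := by
    intro p q h
    have h' : ξ • (p : PolynomialModule A M) = ξ • (q : PolynomialModule A M) :=
      congrArg Subtype.val h
    have hcc : ∀ i, (p : PolynomialModule A M).coeff i = (q : PolynomialModule A M).coeff i :=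
      fun i => hreg (by show x • (p : PolynomialModule A M).coeff i = x • (q : PolynomialModule A M).coeff i; rw [← hcoeff, ← hcoeff, h'])
    exact Subtype.ext (PolynomialModule.ext (Finsupp.ext hcc))
  haveI : IsNoetherian (reesAlgebra I) F.submodule := isNoetherian_of_injective ℓ hinj
  exact (Submodule.fg_top _).mp (IsNoetherian.noetherian ⊤)

theorem core {x : A} (hx : x ∈ I) (hreg : IsSMulRegular M x) :
    ∃ n₁ : ℕ, ∀ n ≥ n₁, ∀ m : ℕ, 1 ≤ m → ∀ z : M,
      (∀ a ∈ I ^ m, a • z ∈ (I ^ (m + n) • ⊤ : Submodule A M)) ↔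
        z ∈ (I ^ n • ⊤ : Submodule A M) := by
  obtain ⟨n₀, hn₀⟩ := (rrFiltration_stable I M hx hreg).exists_pow_smul_eq_of_ge
  set F := rrFiltration I M with hF
  have P1 : ∀ n ≥ n₀ + 1, F.N n ≤ (I ^ n • ⊤ : Submodule A M) := by
    intro n hn
    rw [hn₀ n (by omega)]
    have h1 : I • F.N n₀ ≤ (I ^ (n₀ + 1) • ⊤ : Submodule A M) := by
      rw [Submodule.smul_le]
      intro a ha z hz
      exact (mem_rrFiltration I M).mp hz a ha
    calc I ^ (n - n₀) • F.N n₀ = I ^ (n - n₀ - 1) • (I • F.N n₀) := by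
          rw [← mul_smul, ← pow_succ]
          congr 2
          omega
      _ ≤ I ^ (n - n₀ - 1) • ((I ^ (n₀ + 1) : Ideal A) • (⊤ : Submodule A M)) :=
          Submodule.smul_mono le_rfl h1
      _ = (I ^ n • ⊤ : Submodule A M) := by
          rw [← mul_smul, ← pow_add]
          congr 2
          omega
  refine ⟨n₀ + 1, ?_⟩
  have main : ∀ m, 1 ≤ m → ∀ n, n ≥ n₀ + 1 → ∀ z : M,
      (∀ a ∈ I ^ m, a • z ∈ (I ^ (m + n) • ⊤ : Submodule A M)) →
        z ∈ (I ^ n • ⊤ : Submodule A M) := by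
    intro m
    induction m with
    | zero => omega
    | succ m ih =>
      intro _ n hn z hz
      rcases Nat.eq_zero_or_pos m with rfl | hm
      · apply P1 n hn
        rw [mem_rrFiltration]
        intro a ha
        have h2 := hz a (by rwa [pow_one])
        rwa [show 0 + 1 + n = n + 1 by omega] at h2
      · apply P1 n hn
        rw [mem_rrFiltration]
        intro b hb
        refine ih hm (n + 1) (by omega) (b • z) ?_
        intro a ha
        rw [smul_smul]
        have hab : a * b ∈ I ^ (m + 1) := by
          rw [pow_succ]
          exact Ideal.mul_mem_mul ha hb
        have h3 := hz (a * b) hab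
        rwa [show m + 1 + n = m + (n + 1) by omega] at h3
  intro n hn m hm z
  constructor
  · exact main m hm n hn z
  · intro hz a ha
    have h4 := Submodule.smul_mem_smul ha hz
    rwa [← mul_smul, ← pow_add] at h4

end Core

section Transport

universe v w

theorem ratliffRush_core' {A : Type v} [CommRing A] [IsNoetherianRing A]
    (I : Ideal A) (M : Type w) [AddCommGroup M] [Module A M] [Module.Finite A M]
    (hgrade : ∃ x ∈ I, IsSMulRegular M x) :
    ∃ n₁ : ℕ, ∀ n ≥ n₁, ∀ m : ℕ, 1 ≤ m → ∀ z : M,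
      (∀ a ∈ I ^ m, a • z ∈ (I ^ (m + n) • ⊤ : Submodule A M)) ↔
        z ∈ (I ^ n • ⊤ : Submodule A M) := by
  obtain ⟨x, hx, hreg⟩ := hgrade
  let e : A ≃+* ULift.{w} A := ULift.ringEquiv.symm
  haveI : IsNoetherianRing (ULift.{w} A) := isNoetherianRing_of_ringEquiv A e
  let I' : Ideal (ULift.{w} A) := I.map (e : A →+* ULift.{w} A)
  -- ideal membership bridge
  have bridgeI : ∀ (k : ℕ) (a' : ULift.{w} A), a' ∈ I' ^ k ↔ a'.down ∈ I ^ k := by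
    intro k a'
    have h1 : I' ^ k = (I ^ k).map (e : A →+* ULift.{w} A) := (Ideal.map_pow _ _ _).symm
    have hmapmap : Ideal.map (e.symm : ULift.{w} A →+* A)
        (Ideal.map (e : A →+* ULift.{w} A) (I ^ k)) = I ^ k := by
      rw [Ideal.map_map]
      have hc : (e.symm : ULift.{w} A →+* A).comp (e : A →+* ULift.{w} A) = RingHom.id A := by
        ext a
        simp
      rw [hc, Ideal.map_id]
    rw [h1]
    constructor
    · intro h
      have h2 := Ideal.mem_map_of_mem (e.symm : ULift.{w} A →+* A) h
      rwa [hmapmap] at h2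
    · intro h
      have h3 : a' = e a'.down := rfl
      rw [h3]
      exact Ideal.mem_map_of_mem _ h
  -- finiteness of ULift M over ULift A
  haveI : Module.Finite (ULift.{w} A) (ULift.{v} M) := by
    obtain ⟨S, hS⟩ := Module.Finite.fg_top (R := A) (M := ULift.{v} M)
    refine ⟨⟨S, ?_⟩⟩
    rw [eq_top_iff]
    intro w _
    have hw : w ∈ Submodule.span A (S : Set (ULift.{v} M)) := by rw [hS]; trivial
    refine Submodule.span_induction (fun y hy => Submodule.subset_span hy) (zero_mem _)
      (fun y z _ _ hy hz => add_mem hy hz) ?_ hw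
    intro a y _ hy
    have : a • y = (e a) • y := rfl
    rw [this]
    exact Submodule.smul_mem _ _ hy
  -- regularity
  have hreg' : IsSMulRegular (ULift.{v} M) (e x) := by
    intro w w' h
    have hd : x • w.down = x • w'.down := congrArg ULift.down h
    exact ULift.down_injective (hreg hd)
  have hx' : e x ∈ I' := Ideal.mem_map_of_mem _ hx
  -- module membership bridge
  have bridgeM : ∀ (k : ℕ) (z : M),
      z ∈ (I ^ k • ⊤ : Submodule A M) ↔
        ULift.up z ∈ (I' ^ k • ⊤ : Submodule (ULift.{w} A) (ULift.{v} M)) := by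
    intro k z
    constructor
    · intro hz
      refine Submodule.smul_induction_on (p := fun w => (ULift.up w : ULift.{v} M) ∈
        (I' ^ k • ⊤ : Submodule (ULift.{w} A) (ULift.{v} M))) hz ?_ ?_
      · intro a ha w _
        have h1 : (ULift.up (a • w) : ULift.{v} M) = (e a) • (ULift.up w : ULift.{v} M) := rfl
        rw [h1]
        exact Submodule.smul_mem_smul ((bridgeI k (e a)).mpr ha) trivial
      · intro u v hu hv
        have h1 : (ULift.up (u + v) : ULift.{v} M) = ULift.up u + ULift.up v := rfl
        rw [h1]
        exact add_mem hu hv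
    · intro hz
      have h2 : (ULift.up z : ULift.{v} M).down ∈ (I ^ k • ⊤ : Submodule A M) := by
        refine Submodule.smul_induction_on (p := fun w => w.down ∈ (I ^ k • ⊤ : Submodule A M))
          hz ?_ ?_
        · intro a' ha' w _
          have hd : (a' • w).down = a'.down • w.down := rfl
          rw [hd]
          exact Submodule.smul_mem_smul ((bridgeI k a').mp ha') trivial
        · intro u v hu hv
          have hd : (u + v).down = u.down + v.down := rfl
          rw [hd]
          exact add_mem hu hv
      exact h2
  obtain ⟨n₁, hn₁⟩ := core I' (ULift.{v} M) hx' hreg'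
  refine ⟨n₁, fun n hn m hm z => ?_⟩
  have hcore := hn₁ n hn m hm (ULift.up z)
  constructor
  · intro hz
    refine (bridgeM n z).mpr (hcore.mp ?_)
    intro a' ha'
    have h1 : a' • (ULift.up z : ULift.{v} M) = ULift.up (a'.down • z) := rfl
    rw [h1]
    exact (bridgeM (m + n) _).mp (hz a'.down ((bridgeI m a').mp ha'))
  · intro hz a ha
    have h3 := hcore.mpr ((bridgeM n z).mp hz) (e a) ((bridgeI m (e a)).mpr ha)
    have h1 : (e a) • (ULift.up z : ULift.{v} M) = ULift.up (a • z) := rfl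
    rw [h1] at h3
    exact (bridgeM (m + n) _).mpr h3

end Transport

/-- **Ratliff–Rush closures stabilize.**
Let `(A,m)` be a Noetherian local ring, `I` an ideal and `M` a finitely generated `A`-module
with `grade(I,M) > 0` (i.e. `I` contains an `M`-regular element). Then for all `n ≫ 0` and
all `m ≥ 1` we have `(I^{m+n}M :_M I^m) = I^n M`; equivalently the Ratliff–Rush closure
`Ĩⁿ M = ∪_{m ≥ 1} (I^{m+n}M :_M I^m)` equals `IⁿM` for all `n ≫ 0`. -/
theorem ratliffRush_stabilizes (A : Type*) [CommRing A] [IsNoetherianRing A] [IsLocalRing A]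
    (I : Ideal A) (M : Type*) [AddCommGroup M] [Module A M] [Module.Finite A M]
    (hgrade : ∃ x ∈ I, IsSMulRegular M x) :
    ∃ n₁ : ℕ, ∀ n ≥ n₁, ∀ m : ℕ, 1 ≤ m → ∀ z : M,
      (∀ a ∈ I ^ m, a • z ∈ (I ^ (m + n) • ⊤ : Submodule A M)) ↔
        z ∈ (I ^ n • ⊤ : Submodule A M) := by
  exact ratliffRush_core' I M hgrade
end
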